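/- Let Ω = (0,R) × (−a,a) with measure r dr dz, and let ψ be a smooth solution of −ψ,rr − (1/r)ψ,r − ψ,zz + ψ/r² = ω in Ω with ψ = 0 on the full boundary (r = R, z = ±a) and ψ = O(r) as r → 0⁺ uniformly in z. Then ∫_Ω (ψ,rz² + ψ,zz²) r dr dz + ∫_Ω ψ,z²/r² r dr dz ≤ c ∫_Ω ω² r dr dz. -/

import Mathlib

open MeasureTheory Set Function

/-- Partial derivative in the first (radial) variable. -/
noncomputable def pdr (f : ℝ → ℝ → ℝ) : ℝ → ℝ → ℝ := fun r z => deriv (fun s => f s z) r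

/-- Partial derivative in the second (axial) variable. -/
noncomputable def pdz (f : ℝ → ℝ → ℝ) : ℝ → ℝ → ℝ := fun r z => deriv (fun w => f r w) z

section basic
variable {f : ℝ → ℝ → ℝ}

lemma contDiff_fix_z (hf : ContDiff ℝ (⊤:ℕ∞) (uncurry f)) (z : ℝ) :
    ContDiff ℝ (⊤:ℕ∞) (fun s => f s z) :=
  hf.comp (contDiff_id.prodMk contDiff_const)

lemma contDiff_fix_r (hf : ContDiff ℝ (⊤:ℕ∞) (uncurry f)) (r : ℝ) :
    ContDiff ℝ (⊤:ℕ∞) (fun w => f r w) :=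
  hf.comp (contDiff_const.prodMk contDiff_id)

lemma hasDerivAt_pdr (hf : ContDiff ℝ (⊤:ℕ∞) (uncurry f)) (r z : ℝ) :
    HasDerivAt (fun s => f s z) (pdr f r z) r :=
  ((contDiff_fix_z hf z).differentiable (by simp) r).hasDerivAt

lemma hasDerivAt_pdz (hf : ContDiff ℝ (⊤:ℕ∞) (uncurry f)) (r z : ℝ) :
    HasDerivAt (fun w => f r w) (pdz f r z) z :=
  ((contDiff_fix_r hf r).differentiable (by simp) z).hasDerivAt

lemma pdr_eq_fderiv (hf : ContDiff ℝ (⊤:ℕ∞) (uncurry f)) (r z : ℝ) :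
    pdr f r z = fderiv ℝ (uncurry f) (r, z) ((1:ℝ), (0:ℝ)) := by
  have h1 : HasDerivAt (fun s : ℝ => ((s, z) : ℝ × ℝ)) (1, 0) r :=
    (hasDerivAt_id r).prodMk (hasDerivAt_const r z)
  have h2 : HasFDerivAt (uncurry f) (fderiv ℝ (uncurry f) (r, z)) (r, z) :=
    (hf.differentiable (by simp) (r, z)).hasFDerivAt
  have := (h2.comp_hasDerivAt r h1)
  exact (hasDerivAt_pdr hf r z).unique this

lemma pdz_eq_fderiv (hf : ContDiff ℝ (⊤:ℕ∞) (uncurry f)) (r z : ℝ) :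
    pdz f r z = fderiv ℝ (uncurry f) (r, z) ((0:ℝ), (1:ℝ)) := by
  have h1 : HasDerivAt (fun w : ℝ => ((r, w) : ℝ × ℝ)) (0, 1) z :=
    (hasDerivAt_const z r).prodMk (hasDerivAt_id z)
  have h2 : HasFDerivAt (uncurry f) (fderiv ℝ (uncurry f) (r, z)) (r, z) :=
    (hf.differentiable (by simp) (r, z)).hasFDerivAt
  exact (hasDerivAt_pdz hf r z).unique (h2.comp_hasDerivAt z h1)

lemma contDiff_fderiv_apply (hf : ContDiff ℝ (⊤:ℕ∞) (uncurry f)) (v : ℝ × ℝ) :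
    ContDiff ℝ (⊤:ℕ∞) (fun p => fderiv ℝ (uncurry f) p v) :=
  (hf.fderiv_right (by norm_cast)).clm_apply contDiff_const

lemma contDiff_pdr (hf : ContDiff ℝ (⊤:ℕ∞) (uncurry f)) :
    ContDiff ℝ (⊤:ℕ∞) (uncurry (pdr f)) := by
  have : uncurry (pdr f) = fun p : ℝ × ℝ => fderiv ℝ (uncurry f) p ((1:ℝ),(0:ℝ)) := by
    funext p; exact pdr_eq_fderiv hf p.1 p.2
  rw [this]; exact contDiff_fderiv_apply hf _

lemma contDiff_pdz (hf : ContDiff ℝ (⊤:ℕ∞) (uncurry f)) :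
    ContDiff ℝ (⊤:ℕ∞) (uncurry (pdz f)) := by
  have : uncurry (pdz f) = fun p : ℝ × ℝ => fderiv ℝ (uncurry f) p ((0:ℝ),(1:ℝ)) := by
    funext p; exact pdz_eq_fderiv hf p.1 p.2
  rw [this]; exact contDiff_fderiv_apply hf _

lemma pdr_pdz_comm (hf : ContDiff ℝ (⊤:ℕ∞) (uncurry f)) (r z : ℝ) :
    pdr (pdz f) r z = pdz (pdr f) r z := by
  have hsym : IsSymmSndFDerivAt ℝ (uncurry f) (r, z) :=
    (hf.contDiffAt).isSymmSndFDerivAt (by simpa using (WithTop.coe_le_coe.mpr (le_top : (2:ℕ∞) ≤ ⊤)))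
  have hd : Differentiable ℝ (fderiv ℝ (uncurry f)) :=
    (hf.fderiv_right (m := ((⊤:ℕ∞) : WithTop ℕ∞)) (by norm_cast)).differentiable (by simp)
  have key : ∀ v w : ℝ × ℝ,
      fderiv ℝ (fun p => fderiv ℝ (uncurry f) p v) (r,z) w
        = fderiv ℝ (fderiv ℝ (uncurry f)) (r,z) w v := by
    intro v w
    rw [fderiv_clm_apply (hd (r,z)) (differentiableAt_const v)]
    simp
  have hfz : uncurry (pdz f) = fun p : ℝ × ℝ => fderiv ℝ (uncurry f) p ((0:ℝ),(1:ℝ)) :=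
    funext fun p => pdz_eq_fderiv hf p.1 p.2
  have hfr : uncurry (pdr f) = fun p : ℝ × ℝ => fderiv ℝ (uncurry f) p ((1:ℝ),(0:ℝ)) :=
    funext fun p => pdr_eq_fderiv hf p.1 p.2
  have e1 : pdr (pdz f) r z
      = fderiv ℝ (fun p => fderiv ℝ (uncurry f) p ((0:ℝ),(1:ℝ))) (r,z) ((1:ℝ),(0:ℝ)) := by
    rw [pdr_eq_fderiv (contDiff_pdz hf) r z, hfz]
  have e2 : pdz (pdr f) r z
      = fderiv ℝ (fun p => fderiv ℝ (uncurry f) p ((1:ℝ),(0:ℝ))) (r,z) ((0:ℝ),(1:ℝ)) := by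
    rw [pdz_eq_fderiv (contDiff_pdr hf) r z, hfr]
  rw [e1, e2, key, key, hsym]

end basic

section slices
variable {f g : ℝ → ℝ → ℝ}

lemma integral_Ioo_eq_intervalIntegral (h : ℝ → ℝ) {u v : ℝ} (huv : u ≤ v) :
    ∫ x in Ioo u v, h x = ∫ x in u..v, h x := by
  rw [intervalIntegral.integral_of_le huv, MeasureTheory.integral_Ioc_eq_integral_Ioo]

lemma ibp_z (hf : ContDiff ℝ (⊤:ℕ∞) (uncurry f)) (hg : ContDiff ℝ (⊤:ℕ∞) (uncurry g))
    (r : ℝ) {u v : ℝ} (huv : u ≤ v) (hu : f r u = 0) (hv : f r v = 0) :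
    ∫ w in u..v, (pdz f r w * g r w + f r w * pdz g r w) = 0 := by
  have hderiv : ∀ w ∈ uIcc u v,
      HasDerivAt (fun w => f r w * g r w) (pdz f r w * g r w + f r w * pdz g r w) w :=
    fun w _ => (hasDerivAt_pdz hf r w).mul (hasDerivAt_pdz hg r w)
  have hcont : Continuous (fun w => pdz f r w * g r w + f r w * pdz g r w) :=
    ((contDiff_fix_r (contDiff_pdz hf) r).continuous.mul (contDiff_fix_r hg r).continuous).add
      ((contDiff_fix_r hf r).continuous.mul (contDiff_fix_r (contDiff_pdz hg) r).continuous)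
  rw [intervalIntegral.integral_eq_sub_of_hasDerivAt hderiv (hcont.intervalIntegrable u v), hu, hv]
  ring

lemma ibp_r (hg : ContDiff ℝ (⊤:ℕ∞) (uncurry g)) (z : ℝ) {R : ℝ} (hR : 0 ≤ R)
    (hz : g R z = 0) :
    ∫ s in (0:ℝ)..R,
      ((pdr (pdr g) s z * g s z + pdr g s z * pdr g s z) * s + pdr g s z * g s z) = 0 := by
  have hderiv : ∀ s ∈ uIcc (0:ℝ) R,
      HasDerivAt (fun s => pdr g s z * g s z * s)
        ((pdr (pdr g) s z * g s z + pdr g s z * pdr g s z) * s + pdr g s z * g s z) s := by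
    intro s _
    have h1 : HasDerivAt (fun s => pdr g s z * g s z)
        (pdr (pdr g) s z * g s z + pdr g s z * pdr g s z) s :=
      (hasDerivAt_pdr (contDiff_pdr hg) s z).mul (hasDerivAt_pdr hg s z)
    have h2 := h1.mul (hasDerivAt_id' s)
    simp only [mul_one] at h2
    exact h2
  have hcont : Continuous (fun s =>
      (pdr (pdr g) s z * g s z + pdr g s z * pdr g s z) * s + pdr g s z * g s z) := by
    have c1 : Continuous (fun s => pdr (pdr g) s z) :=
      (contDiff_fix_z (contDiff_pdr (contDiff_pdr hg)) z).continuous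
    have c2 : Continuous (fun s => pdr g s z) := (contDiff_fix_z (contDiff_pdr hg) z).continuous
    have c3 : Continuous (fun s => g s z) := (contDiff_fix_z hg z).continuous
    exact (((c1.mul c3).add (c2.mul c2)).mul continuous_id).add (c2.mul c3)
  rw [intervalIntegral.integral_eq_sub_of_hasDerivAt hderiv (hcont.intervalIntegrable 0 R), hz]
  ring

end slices

section boundary
variable {ψ : ℝ → ℝ → ℝ} {R a C L : ℝ}

lemma psi_zero_axis (hψ : ContDiff ℝ (⊤:ℕ∞) (uncurry ψ)) (hR : 0 < R)
    (hC : ∀ r ∈ Ioo 0 R, ∀ z ∈ Ioo (-a) a, |ψ r z| ≤ C * r)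
    {z : ℝ} (hz : z ∈ Ioo (-a) a) : ψ 0 z = 0 := by
  have hcont : Continuous (fun r => ψ r z) := (contDiff_fix_z hψ z).continuous
  have h1 : Filter.Tendsto (fun r => ψ r z) (nhdsWithin 0 (Ioi 0)) (nhds (ψ 0 z)) :=
    (hcont.tendsto 0).mono_left nhdsWithin_le_nhds
  have hmem : Ioo (0:ℝ) R ∈ nhdsWithin (0:ℝ) (Ioi 0) :=
    Ioo_mem_nhdsGT hR
  have hub : ∀ᶠ r in nhdsWithin (0:ℝ) (Ioi 0), ψ r z ≤ C * r :=
    Filter.eventually_of_mem hmem fun r hr => (abs_le.1 (hC r hr z hz)).2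
  have hlb : ∀ᶠ r in nhdsWithin (0:ℝ) (Ioi 0), -(C * r) ≤ ψ r z :=
    Filter.eventually_of_mem hmem fun r hr => (abs_le.1 (hC r hr z hz)).1
  have htb : Filter.Tendsto (fun r : ℝ => C * r) (nhdsWithin 0 (Ioi 0)) (nhds 0) := by
    have h0 : Continuous (fun r : ℝ => C * r) := continuous_const.mul continuous_id
    have := (h0.tendsto (0:ℝ)).mono_left (nhdsWithin_le_nhds (s := Ioi (0:ℝ)))
    simpa using this
  have h2 : Filter.Tendsto (fun r => ψ r z) (nhdsWithin 0 (Ioi 0)) (nhds 0) :=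
    tendsto_of_tendsto_of_tendsto_of_le_of_le' (by simpa using htb.neg) htb hlb hub
  exact tendsto_nhds_unique h1 h2

lemma pdz_zero_axis (hψ : ContDiff ℝ (⊤:ℕ∞) (uncurry ψ)) (hR : 0 < R)
    (hC : ∀ r ∈ Ioo 0 R, ∀ z ∈ Ioo (-a) a, |ψ r z| ≤ C * r)
    {z : ℝ} (hz : z ∈ Ioo (-a) a) : pdz ψ 0 z = 0 := by
  have hev : (fun w => ψ 0 w) =ᶠ[nhds z] (fun _ => (0:ℝ)) := by
    filter_upwards [isOpen_Ioo.mem_nhds hz] with w hw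
    exact psi_zero_axis hψ hR hC hw
  simp only [pdz]
  rw [hev.deriv_eq, deriv_const]

lemma pdz_bound (hψ : ContDiff ℝ (⊤:ℕ∞) (uncurry ψ)) (hR : 0 < R)
    (hC : ∀ r ∈ Ioo 0 R, ∀ z ∈ Ioo (-a) a, |ψ r z| ≤ C * r)
    (hL : ∀ s ∈ Icc (0:ℝ) R, ∀ w ∈ Icc (-a) a, |pdr (pdz ψ) s w| ≤ L)
    {r z : ℝ} (hr : r ∈ Ioo 0 R) (hz : z ∈ Ioo (-a) a) :
    |pdz ψ r z| ≤ L * r := by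
  have hder : ∀ x ∈ Icc (0:ℝ) r,
      HasDerivWithinAt (fun s => pdz ψ s z) (pdr (pdz ψ) x z) (Icc 0 r) x :=
    fun x _ => (hasDerivAt_pdr (contDiff_pdz hψ) x z).hasDerivWithinAt
  have hbd : ∀ x ∈ Ico (0:ℝ) r, ‖pdr (pdz ψ) x z‖ ≤ L := by
    intro x hx
    exact hL x ⟨hx.1, hx.2.le.trans hr.2.le⟩ z ⟨hz.1.le, hz.2.le⟩
  have := norm_image_sub_le_of_norm_deriv_le_segment' hder hbd r ⟨hr.1.le, le_rfl⟩
  rw [pdz_zero_axis hψ hR hC hz] at this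
  simpa using this
end boundary

set_option maxHeartbeats 2000000 in
/-- Estimate (2.12) of Lemma 2.5: second-order estimate in `z` for the axially symmetric
stream function satisfying `-ψ,rr - (1/r)ψ,r - ψ,zz + ψ/r² = ω` in `(0,R) × (-a,a)`. -/
theorem second_order_z_estimate (R a : ℝ) (hR : 0 < R) (ha : 0 < a) :
    ∃ c > (0:ℝ), ∀ ψ ω : ℝ → ℝ → ℝ,
      ContDiff ℝ (⊤ : ℕ∞) (Function.uncurry ψ) →
      (∀ r ∈ Ioo 0 R, ∀ z ∈ Ioo (-a) a,
        -(pdr (pdr ψ) r z) - 1 / r * pdr ψ r z - pdz (pdz ψ) r z + ψ r z / r ^ 2 = ω r z) →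
      (∀ z ∈ Icc (-a) a, ψ R z = 0) →
      (∀ r ∈ Icc 0 R, ψ r a = 0 ∧ ψ r (-a) = 0) →
      (∃ C : ℝ, ∀ r ∈ Ioo 0 R, ∀ z ∈ Ioo (-a) a, |ψ r z| ≤ C * r) →
      (∫⁻ z in Ioo (-a) a, ∫⁻ r in Ioo (0:ℝ) R,
          ENNReal.ofReal (((pdr (pdz ψ) r z) ^ 2 + (pdz (pdz ψ) r z) ^ 2) * r))
        + (∫⁻ z in Ioo (-a) a, ∫⁻ r in Ioo (0:ℝ) R,
            ENNReal.ofReal ((pdz ψ r z) ^ 2 / r ^ 2 * r))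
        ≤ ENNReal.ofReal c * ∫⁻ z in Ioo (-a) a, ∫⁻ r in Ioo (0:ℝ) R,
            ENNReal.ofReal ((ω r z) ^ 2 * r) := by
  refine ⟨1, one_pos, ?_⟩
  intro ψ ω hψ hpde hbR hbz hO
  obtain ⟨C₀, hC₀⟩ := hO
  -- measures and sets
  set S : Set (ℝ × ℝ) := (Ioo (-a) a) ×ˢ (Ioo 0 R) with hS
  set K : Set (ℝ × ℝ) := (Icc (-a) a) ×ˢ (Icc 0 R) with hKdef
  have hK : IsCompact K := isCompact_Icc.prod isCompact_Icc
  have hSK : S ⊆ K := prod_mono Ioo_subset_Icc_self Ioo_subset_Icc_self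
  have hSmeas : MeasurableSet S := measurableSet_Ioo.prod measurableSet_Ioo
  set P : Measure (ℝ × ℝ) := volume.restrict S with hP
  haveI hPfin : IsFiniteMeasure P := by
    constructor
    rw [hP, Measure.restrict_apply_univ]
    exact ((measure_mono hSK).trans_lt hK.measure_lt_top)
  have hProd : (volume.restrict (Ioo (-a) a)).prod (volume.restrict (Ioo (0:ℝ) R)) = P := by
    rw [Measure.prod_restrict, hP, ← Measure.volume_eq_prod]
  have haeS : ∀ᵐ p ∂P, p.1 ∈ Ioo (-a) a ∧ p.2 ∈ Ioo 0 R := by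
    filter_upwards [ae_restrict_mem hSmeas] with p hp
    exact ⟨hp.1, hp.2⟩
  -- conversion of iterated lintegrals
  have hlconv : ∀ F : ℝ × ℝ → ℝ, AEMeasurable F P →
      (∫⁻ z in Ioo (-a) a, ∫⁻ r in Ioo (0:ℝ) R, ENNReal.ofReal (F (z, r)))
        = ∫⁻ p, ENNReal.ofReal (F p) ∂P := by
    intro F hF
    rw [← hProd]
    rw [← hProd] at hF
    exact MeasureTheory.lintegral_lintegral
      (ENNReal.measurable_ofReal.comp_aemeasurable hF)
  -- Fubini helpers
  have hfub1 : ∀ h : ℝ × ℝ → ℝ, Integrable h P →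
      ∫ p, h p ∂P = ∫ z in Ioo (-a) a, ∫ r in Ioo (0:ℝ) R, h (z, r) := by
    intro h ih
    rw [← hProd] at ih ⊢
    exact MeasureTheory.integral_prod h ih
  have hfub2 : ∀ h : ℝ × ℝ → ℝ, Integrable h P →
      ∫ p, h p ∂P = ∫ r in Ioo (0:ℝ) R, ∫ z in Ioo (-a) a, h (z, r) := by
    intro h ih
    rw [← hProd] at ih ⊢
    exact MeasureTheory.integral_prod_symm h ih
  -- integrability helpers
  have hinteg_cont : ∀ h : ℝ × ℝ → ℝ, Continuous h → Integrable h P := by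
    intro h hc
    have : IntegrableOn h K volume := hc.continuousOn.integrableOn_compact hK
    exact this.mono_set hSK
  have hinteg_bdd : ∀ h : ℝ × ℝ → ℝ, AEStronglyMeasurable h P → ∀ M : ℝ,
      (∀ᵐ p ∂P, |h p| ≤ M) → Integrable h P := by
    intro h hm M hb
    exact MeasureTheory.Integrable.mono' (integrable_const M) hm
      (by simpa [Real.norm_eq_abs] using hb)
  have hbound : ∀ h : ℝ × ℝ → ℝ, Continuous h → ∃ M, 0 ≤ M ∧ ∀ p ∈ K, |h p| ≤ M := by
    intro h hc
    obtain ⟨M, hM⟩ := hK.exists_bound_of_continuousOn hc.continuousOn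
    refine ⟨max M 0, le_max_right _ _, fun p hp => ?_⟩
    exact le_trans (by simpa [Real.norm_eq_abs] using hM p hp) (le_max_left _ _)
  -- smoothness of derived functions
  have hg : ContDiff ℝ (⊤:ℕ∞) (uncurry (pdz ψ)) := contDiff_pdz hψ
  have hg1s : ContDiff ℝ (⊤:ℕ∞) (uncurry (pdr (pdz ψ))) := contDiff_pdr hg
  have hg2s : ContDiff ℝ (⊤:ℕ∞) (uncurry (pdz (pdz ψ))) := contDiff_pdz hg
  have hg11s : ContDiff ℝ (⊤:ℕ∞) (uncurry (pdr (pdr (pdz ψ)))) := contDiff_pdr hg1s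
  have hψrs : ContDiff ℝ (⊤:ℕ∞) (uncurry (pdr ψ)) := contDiff_pdr hψ
  have hψrrs : ContDiff ℝ (⊤:ℕ∞) (uncurry (pdr (pdr ψ))) := contDiff_pdr hψrs
  have hsw : ∀ {f : ℝ → ℝ → ℝ}, ContDiff ℝ (⊤:ℕ∞) (uncurry f) →
      Continuous (fun p : ℝ × ℝ => f p.2 p.1) := by
    intro f hf
    exact hf.continuous.comp continuous_swap
  -- nonnegativity of C₀
  have hC0 : 0 ≤ C₀ := by
    have h1 := hC₀ (R/2) ⟨by positivity, by linarith⟩ 0 ⟨by linarith, ha⟩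
    nlinarith [abs_nonneg (ψ (R/2) 0)]
  -- bound on pdz ψ near the axis
  obtain ⟨L, hL0, hLb⟩ := hbound _ (hsw hg1s)
  have hgb : ∀ p : ℝ × ℝ, p ∈ S → |pdz ψ p.2 p.1| ≤ L * p.2 := by
    intro p hp
    refine pdz_bound hψ hR hC₀ ?_ hp.2 hp.1
    intro s hs w hw
    exact hLb (w, s) ⟨hw, hs⟩
  obtain ⟨M2, hM20, hM2b⟩ := hbound _ (hsw hg2s)
  -- boundary values
  have hbr : ∀ r ∈ Ioo (0:ℝ) R, pdr ψ r a = 0 ∧ pdr ψ r (-a) = 0 := by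
    intro r hr
    constructor
    · have hev : (fun s => ψ s a) =ᶠ[nhds r] (fun _ => (0:ℝ)) := by
        filter_upwards [isOpen_Ioo.mem_nhds hr] with s hs
        exact (hbz s ⟨hs.1.le, hs.2.le⟩).1
      show deriv (fun s => ψ s a) r = 0
      rw [hev.deriv_eq, deriv_const]
    · have hev : (fun s => ψ s (-a)) =ᶠ[nhds r] (fun _ => (0:ℝ)) := by
        filter_upwards [isOpen_Ioo.mem_nhds hr] with s hs
        exact (hbz s ⟨hs.1.le, hs.2.le⟩).2
      show deriv (fun s => ψ s (-a)) r = 0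
      rw [hev.deriv_eq, deriv_const]
  have hbrr : ∀ r ∈ Ioo (0:ℝ) R, pdr (pdr ψ) r a = 0 ∧ pdr (pdr ψ) r (-a) = 0 := by
    intro r hr
    constructor
    · have hev : (fun s => pdr ψ s a) =ᶠ[nhds r] (fun _ => (0:ℝ)) := by
        filter_upwards [isOpen_Ioo.mem_nhds hr] with s hs
        exact (hbr s hs).1
      show deriv (fun s => pdr ψ s a) r = 0
      rw [hev.deriv_eq, deriv_const]
    · have hev : (fun s => pdr ψ s (-a)) =ᶠ[nhds r] (fun _ => (0:ℝ)) := by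
        filter_upwards [isOpen_Ioo.mem_nhds hr] with s hs
        exact (hbr s hs).2
      show deriv (fun s => pdr ψ s (-a)) r = 0
      rw [hev.deriv_eq, deriv_const]
  have hgR : ∀ z ∈ Ioo (-a) a, pdz ψ R z = 0 := by
    intro z hz
    have hev : (fun w => ψ R w) =ᶠ[nhds z] (fun _ => (0:ℝ)) := by
      filter_upwards [isOpen_Ioo.mem_nhds hz] with w hw
      exact hbR w ⟨hw.1.le, hw.2.le⟩
    show deriv (fun w => ψ R w) z = 0
    rw [hev.deriv_eq, deriv_const]
  -- PDE right-hand side, measurable version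
  have mE : Measurable (fun p : ℝ × ℝ =>
      -(pdr (pdr ψ) p.2 p.1) - 1 / p.2 * pdr ψ p.2 p.1 - pdz (pdz ψ) p.2 p.1
        + ψ p.2 p.1 / p.2 ^ 2) := by
    exact ((((hsw hψrrs).measurable).neg.sub
        ((measurable_const.div measurable_snd).mul (hsw hψrs).measurable)).sub
        (hsw hg2s).measurable).add
        ((hsw hψ).measurable.div (measurable_snd.pow measurable_const))
  have haeω : ∀ᵐ p ∂P,
      -(pdr (pdr ψ) p.2 p.1) - 1 / p.2 * pdr ψ p.2 p.1 - pdz (pdz ψ) p.2 p.1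
        + ψ p.2 p.1 / p.2 ^ 2 = ω p.2 p.1 := by
    filter_upwards [haeS] with p hp
    exact hpde p.2 hp.2 p.1 hp.1
  have aefω : AEMeasurable (fun p : ℝ × ℝ => (ω p.2 p.1) ^ 2 * p.2) P := by
    refine AEMeasurable.congr ((mE.pow_const 2).mul measurable_snd).aemeasurable ?_
    filter_upwards [haeω] with p hp
    simp only [Pi.mul_apply]
    rw [hp]
  by_cases hTop : (∫⁻ p, ENNReal.ofReal ((ω p.2 p.1) ^ 2 * p.2) ∂P) = ⊤
  · rw [hlconv (fun p => (ω p.2 p.1) ^ 2 * p.2) aefω, hTop]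
    simp
  -- continuity / integrability of all relevant integrands
  have i1 : Integrable (fun p : ℝ × ℝ =>
      ((pdr (pdz ψ) p.2 p.1) ^ 2 + (pdz (pdz ψ) p.2 p.1) ^ 2) * p.2) P :=
    hinteg_cont _ ((((hsw hg1s).pow 2).add ((hsw hg2s).pow 2)).mul continuous_snd)
  have i3 : Integrable (fun p : ℝ × ℝ => (pdz (pdz ψ) p.2 p.1) ^ 2 * p.2) P :=
    hinteg_cont _ (((hsw hg2s).pow 2).mul continuous_snd)
  have if11 : Integrable (fun p : ℝ × ℝ => (pdr (pdz ψ) p.2 p.1) ^ 2 * p.2) P :=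
    hinteg_cont _ (((hsw hg1s).pow 2).mul continuous_snd)
  have ih1 : Integrable (fun p : ℝ × ℝ =>
      pdr (pdr ψ) p.2 p.1 * pdz (pdz ψ) p.2 p.1 * p.2) P :=
    hinteg_cont _ (((hsw hψrrs).mul (hsw hg2s)).mul continuous_snd)
  have ih2 : Integrable (fun p : ℝ × ℝ => pdr ψ p.2 p.1 * pdz (pdz ψ) p.2 p.1) P :=
    hinteg_cont _ ((hsw hψrs).mul (hsw hg2s))
  have ih7 : Integrable (fun p : ℝ × ℝ => pdr (pdz ψ) p.2 p.1 * pdz ψ p.2 p.1) P :=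
    hinteg_cont _ ((hsw hg1s).mul (hsw hg))
  have ih5 : Integrable (fun p : ℝ × ℝ =>
      pdr (pdr (pdz ψ)) p.2 p.1 * pdz ψ p.2 p.1 * p.2) P :=
    hinteg_cont _ (((hsw hg11s).mul (hsw hg)).mul continuous_snd)
  have ih4 : Integrable (fun p : ℝ × ℝ => -(ψ p.2 p.1 * pdz (pdz ψ) p.2 p.1 / p.2)) P := by
    refine hinteg_bdd _ ((((hsw hψ).measurable.mul
      (hsw hg2s).measurable).div measurable_snd).neg.aemeasurable.aestronglyMeasurable)
      (C₀ * M2) ?_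
    filter_upwards [haeS] with p hp
    have hr : 0 < p.2 := hp.2.1
    have hψb : |ψ p.2 p.1| ≤ C₀ * p.2 := hC₀ p.2 hp.2 p.1 hp.1
    have hg2b : |pdz (pdz ψ) p.2 p.1| ≤ M2 := hM2b p (hSK ⟨hp.1, hp.2⟩)
    rw [abs_neg, abs_div, abs_mul, abs_of_pos hr, div_le_iff₀ hr]
    nlinarith [abs_nonneg (pdz (pdz ψ) p.2 p.1), abs_nonneg (ψ p.2 p.1)]
  have ih8 : Integrable (fun p : ℝ × ℝ => (pdz ψ p.2 p.1) ^ 2 / p.2) P := by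
    refine hinteg_bdd _ ((((hsw hg).measurable.pow_const 2).div
      measurable_snd).aemeasurable.aestronglyMeasurable) (L ^ 2 * R) ?_
    filter_upwards [haeS] with p hp
    have hr : 0 < p.2 := hp.2.1
    have hgb' : |pdz ψ p.2 p.1| ≤ L * p.2 := hgb p ⟨hp.1, hp.2⟩
    rw [abs_of_nonneg (by positivity), div_le_iff₀ hr]
    calc pdz ψ p.2 p.1 ^ 2 = |pdz ψ p.2 p.1| ^ 2 := (sq_abs _).symm
      _ ≤ (L * p.2) ^ 2 := pow_le_pow_left₀ (abs_nonneg _) hgb' 2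
      _ = L ^ 2 * p.2 * p.2 := by ring
      _ ≤ L ^ 2 * R * p.2 := by nlinarith [mul_le_mul_of_nonneg_left hp.2.2.le (by positivity : (0:ℝ) ≤ L ^ 2 * p.2)]
  have haepos : ∀ᵐ p ∂P, 0 < p.2 := by
    filter_upwards [haeS] with p hp
    exact hp.2.1
  have iω : Integrable (fun p : ℝ × ℝ => (ω p.2 p.1) ^ 2 * p.2) P := by
    refine ⟨aefω.aestronglyMeasurable, ?_⟩
    refine (hasFiniteIntegral_iff_ofReal ?_).2 (lt_top_iff_ne_top.mpr hTop)
    filter_upwards [haepos] with p hp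
    positivity
  have icross : Integrable (fun p : ℝ × ℝ => -(ω p.2 p.1) * pdz (pdz ψ) p.2 p.1 * p.2) P := by
    have ms : AEStronglyMeasurable
        (fun p : ℝ × ℝ => -(ω p.2 p.1) * pdz (pdz ψ) p.2 p.1 * p.2) P := by
      refine (AEMeasurable.congr ((((mE.neg).mul (hsw hg2s).measurable).mul
        measurable_snd)).aemeasurable ?_).aestronglyMeasurable
      filter_upwards [haeω] with p hp
      simp only [Pi.mul_apply, Pi.neg_apply]
      rw [hp]
    refine MeasureTheory.Integrable.mono' ((iω.div_const 2).add
      (integrable_const (M2 ^ 2 * R / 2))) ms ?_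
    filter_upwards [haeS] with p hp
    have hr : 0 < p.2 := hp.2.1
    have hg2b : |pdz (pdz ψ) p.2 p.1| ≤ M2 := hM2b p (hSK ⟨hp.1, hp.2⟩)
    rw [Real.norm_eq_abs, abs_mul, abs_mul, abs_neg, abs_of_pos hr]
    simp only [Pi.add_apply]
    have e1 : |ω p.2 p.1| * |pdz (pdz ψ) p.2 p.1| ≤ (ω p.2 p.1 ^ 2 + M2 ^ 2) / 2 := by
      nlinarith [sq_nonneg (|ω p.2 p.1| - |pdz (pdz ψ) p.2 p.1|), sq_abs (ω p.2 p.1),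
        abs_nonneg (ω p.2 p.1), abs_nonneg (pdz (pdz ψ) p.2 p.1), hM20]
    nlinarith [mul_le_mul_of_nonneg_right e1 hr.le,
      mul_le_mul_of_nonneg_left hp.2.2.le (by positivity : (0:ℝ) ≤ M2 ^ 2)]
  have hcommψ : pdz (pdr ψ) = pdr (pdz ψ) := by
    funext r z
    exact (pdr_pdz_comm hψ r z).symm
  have hcomm2 : pdz (pdr (pdr ψ)) = pdr (pdr (pdz ψ)) := by
    have h1 : pdz (pdr (pdr ψ)) = pdr (pdz (pdr ψ)) := by
      funext r z
      exact (pdr_pdz_comm hψrs r z).symm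
    rw [h1, hcommψ]
  have hna : -a ≤ a := by linarith
  -- (SC)
  have SC : ∫ p, -(ψ p.2 p.1 * pdz (pdz ψ) p.2 p.1 / p.2) ∂P
      = ∫ p, (pdz ψ p.2 p.1) ^ 2 / p.2 ∂P := by
    rw [hfub2 _ ih4, hfub2 _ ih8]
    refine integral_congr_ae ?_
    filter_upwards [ae_restrict_mem measurableSet_Ioo] with r hr
    rw [integral_Ioo_eq_intervalIntegral _ hna, integral_Ioo_eq_intervalIntegral _ hna]
    have h0 := ibp_z hψ hg r hna (hbz r ⟨hr.1.le, hr.2.le⟩).2 (hbz r ⟨hr.1.le, hr.2.le⟩).1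
    have cA : Continuous (fun w => pdz ψ r w * pdz ψ r w) :=
      (contDiff_fix_r hg r).continuous.mul (contDiff_fix_r hg r).continuous
    have cB : Continuous (fun w => ψ r w * pdz (pdz ψ) r w) :=
      (contDiff_fix_r hψ r).continuous.mul (contDiff_fix_r hg2s r).continuous
    rw [intervalIntegral.integral_add (cA.intervalIntegrable _ _)
      (cB.intervalIntegrable _ _)] at h0
    have e2 : ∀ z : ℝ, -(ψ r z * pdz (pdz ψ) r z / r)
        = (ψ r z * pdz (pdz ψ) r z) * (-(1/r)) := fun z => by ring
    have e3 : ∀ z : ℝ, (pdz ψ r z) ^ 2 / r = (pdz ψ r z * pdz ψ r z) * (1/r) :=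
      fun z => by ring
    simp only [e2, e3]
    rw [intervalIntegral.integral_mul_const, intervalIntegral.integral_mul_const]
    have e4 : (∫ w in (-a)..a, ψ r w * pdz (pdz ψ) r w)
        = -(∫ w in (-a)..a, pdz ψ r w * pdz ψ r w) := by linarith
    rw [e4]; ring
  -- (SB)
  have SB' : ∫ p, (pdr ψ p.2 p.1 * pdz (pdz ψ) p.2 p.1
      + pdr (pdz ψ) p.2 p.1 * pdz ψ p.2 p.1) ∂P = 0 := by
    rw [hfub2 _ (show Integrable (fun p : ℝ × ℝ => pdr ψ p.2 p.1 * pdz (pdz ψ) p.2 p.1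
      + pdr (pdz ψ) p.2 p.1 * pdz ψ p.2 p.1) P from ih2.add ih7)]
    refine Eq.trans (integral_congr_ae (g := fun _ => (0:ℝ)) ?_) (by simp)
    filter_upwards [ae_restrict_mem measurableSet_Ioo] with r hr
    rw [integral_Ioo_eq_intervalIntegral _ hna]
    have h0 := ibp_z hψrs hg r hna (hbr r hr).2 (hbr r hr).1
    rw [hcommψ] at h0
    have e1 : (fun w => pdr ψ r w * pdz (pdz ψ) r w + pdr (pdz ψ) r w * pdz ψ r w)
        = fun w => pdr (pdz ψ) r w * pdz ψ r w + pdr ψ r w * pdz (pdz ψ) r w := by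
      funext w; ring
    rw [e1]
    exact h0
  have SB : ∫ p, pdr ψ p.2 p.1 * pdz (pdz ψ) p.2 p.1 ∂P
      = -∫ p, pdr (pdz ψ) p.2 p.1 * pdz ψ p.2 p.1 ∂P := by
    rw [integral_add ih2 ih7] at SB'
    linarith
  -- (SA) step 1
  have SA1' : ∫ p, (pdr (pdr ψ) p.2 p.1 * pdz (pdz ψ) p.2 p.1 * p.2
      + pdr (pdr (pdz ψ)) p.2 p.1 * pdz ψ p.2 p.1 * p.2) ∂P = 0 := by
    rw [hfub2 _ (show Integrable (fun p : ℝ × ℝ => pdr (pdr ψ) p.2 p.1 * pdz (pdz ψ) p.2 p.1 * p.2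
      + pdr (pdr (pdz ψ)) p.2 p.1 * pdz ψ p.2 p.1 * p.2) P from ih1.add ih5)]
    refine Eq.trans (integral_congr_ae (g := fun _ => (0:ℝ)) ?_) (by simp)
    filter_upwards [ae_restrict_mem measurableSet_Ioo] with r hr
    rw [integral_Ioo_eq_intervalIntegral _ hna]
    have h0 := ibp_z hψrrs hg r hna (hbrr r hr).2 (hbrr r hr).1
    have e1 : (fun w => pdr (pdr ψ) r w * pdz (pdz ψ) r w * r
        + pdr (pdr (pdz ψ)) r w * pdz ψ r w * r)
        = fun w => (pdz (pdr (pdr ψ)) r w * pdz ψ r w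
            + pdr (pdr ψ) r w * pdz (pdz ψ) r w) * r := by
      rw [hcomm2]; funext w; ring
    rw [e1, intervalIntegral.integral_mul_const, h0, zero_mul]
  have SA1 : ∫ p, pdr (pdr ψ) p.2 p.1 * pdz (pdz ψ) p.2 p.1 * p.2 ∂P
      = -∫ p, pdr (pdr (pdz ψ)) p.2 p.1 * pdz ψ p.2 p.1 * p.2 ∂P := by
    rw [integral_add ih1 ih5] at SA1'
    linarith
  -- (SA) step 2
  have SA2' : ∫ p, ((pdr (pdr (pdz ψ)) p.2 p.1 * pdz ψ p.2 p.1
      + pdr (pdz ψ) p.2 p.1 * pdr (pdz ψ) p.2 p.1) * p.2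
      + pdr (pdz ψ) p.2 p.1 * pdz ψ p.2 p.1) ∂P = 0 := by
    have icont : Integrable (fun p : ℝ × ℝ => ((pdr (pdr (pdz ψ)) p.2 p.1 * pdz ψ p.2 p.1
        + pdr (pdz ψ) p.2 p.1 * pdr (pdz ψ) p.2 p.1) * p.2
        + pdr (pdz ψ) p.2 p.1 * pdz ψ p.2 p.1)) P :=
      hinteg_cont _ (((((hsw hg11s).mul (hsw hg)).add
        ((hsw hg1s).mul (hsw hg1s))).mul continuous_snd).add ((hsw hg1s).mul (hsw hg)))
    rw [hfub1 _ icont]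
    refine Eq.trans (integral_congr_ae (g := fun _ => (0:ℝ)) ?_) (by simp)
    filter_upwards [ae_restrict_mem measurableSet_Ioo] with z hz
    rw [integral_Ioo_eq_intervalIntegral _ hR.le]
    exact ibp_r hg z hR.le (hgR z hz)
  have SA2 : ∫ p, pdr (pdr (pdz ψ)) p.2 p.1 * pdz ψ p.2 p.1 * p.2 ∂P
      = -(∫ p, (pdr (pdz ψ) p.2 p.1) ^ 2 * p.2 ∂P
          + ∫ p, pdr (pdz ψ) p.2 p.1 * pdz ψ p.2 p.1 ∂P) := by
    have e1 : (fun p : ℝ × ℝ => ((pdr (pdr (pdz ψ)) p.2 p.1 * pdz ψ p.2 p.1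
        + pdr (pdz ψ) p.2 p.1 * pdr (pdz ψ) p.2 p.1) * p.2
        + pdr (pdz ψ) p.2 p.1 * pdz ψ p.2 p.1))
        = fun p : ℝ × ℝ => pdr (pdr (pdz ψ)) p.2 p.1 * pdz ψ p.2 p.1 * p.2
          + ((pdr (pdz ψ) p.2 p.1) ^ 2 * p.2 + pdr (pdz ψ) p.2 p.1 * pdz ψ p.2 p.1) := by
      funext p; ring
    rw [e1] at SA2'
    rw [integral_add ih5 (show Integrable (fun p : ℝ × ℝ => (pdr (pdz ψ) p.2 p.1) ^ 2 * p.2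
      + pdr (pdz ψ) p.2 p.1 * pdz ψ p.2 p.1) P from if11.add ih7),
      integral_add if11 ih7] at SA2'
    linarith
  -- split the first integrand
  have hf1split : ∫ p, ((pdr (pdz ψ) p.2 p.1) ^ 2 + (pdz (pdz ψ) p.2 p.1) ^ 2) * p.2 ∂P
      = ∫ p, (pdr (pdz ψ) p.2 p.1) ^ 2 * p.2 ∂P
        + ∫ p, (pdz (pdz ψ) p.2 p.1) ^ 2 * p.2 ∂P := by
    rw [← integral_add if11 i3]
    exact integral_congr_ae (Filter.Eventually.of_forall fun p => by ring)
  -- key identity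
  have KEY : ∫ p, -(ω p.2 p.1) * pdz (pdz ψ) p.2 p.1 * p.2 ∂P
      = ∫ p, ((pdr (pdz ψ) p.2 p.1) ^ 2 + (pdz (pdz ψ) p.2 p.1) ^ 2) * p.2 ∂P
        + ∫ p, (pdz ψ p.2 p.1) ^ 2 / p.2 ∂P := by
    have hpt : (fun p : ℝ × ℝ => -(ω p.2 p.1) * pdz (pdz ψ) p.2 p.1 * p.2) =ᵐ[P]
        (fun p : ℝ × ℝ => pdr (pdr ψ) p.2 p.1 * pdz (pdz ψ) p.2 p.1 * p.2
          + pdr ψ p.2 p.1 * pdz (pdz ψ) p.2 p.1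
          + pdz (pdz ψ) p.2 p.1 ^ 2 * p.2
          + -(ψ p.2 p.1 * pdz (pdz ψ) p.2 p.1 / p.2)) := by
      filter_upwards [haeω, haepos] with p hp hr
      rw [← hp]
      field_simp
      ring
    have iA : Integrable (fun p : ℝ × ℝ => pdr (pdr ψ) p.2 p.1 * pdz (pdz ψ) p.2 p.1 * p.2
        + pdr ψ p.2 p.1 * pdz (pdz ψ) p.2 p.1) P := ih1.add ih2
    have iB : Integrable (fun p : ℝ × ℝ => pdr (pdr ψ) p.2 p.1 * pdz (pdz ψ) p.2 p.1 * p.2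
        + pdr ψ p.2 p.1 * pdz (pdz ψ) p.2 p.1 + pdz (pdz ψ) p.2 p.1 ^ 2 * p.2) P := iA.add i3
    rw [integral_congr_ae hpt, integral_add iB ih4, integral_add iA i3,
      integral_add ih1 ih2]
    linarith [SA1, SA2, SB, SC, hf1split]
  -- Young's inequality
  have hcross_le : ∫ p, -(ω p.2 p.1) * pdz (pdz ψ) p.2 p.1 * p.2 ∂P
      ≤ (∫ p, (ω p.2 p.1) ^ 2 * p.2 ∂P) / 2
        + (∫ p, (pdz (pdz ψ) p.2 p.1) ^ 2 * p.2 ∂P) / 2 := by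
    have hptle : ∀ᵐ p ∂P, -(ω p.2 p.1) * pdz (pdz ψ) p.2 p.1 * p.2
        ≤ (ω p.2 p.1) ^ 2 * p.2 / 2 + (pdz (pdz ψ) p.2 p.1) ^ 2 * p.2 / 2 := by
      filter_upwards [haepos] with p hr
      nlinarith [mul_nonneg (sq_nonneg (ω p.2 p.1 + pdz (pdz ψ) p.2 p.1)) hr.le]
    have hmono := integral_mono_ae icross (show Integrable (fun p : ℝ × ℝ =>
        (ω p.2 p.1) ^ 2 * p.2 / 2 + (pdz (pdz ψ) p.2 p.1) ^ 2 * p.2 / 2) P from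
        (iω.div_const 2).add (i3.div_const 2)) hptle
    rw [integral_add (iω.div_const 2) (i3.div_const 2), integral_div, integral_div] at hmono
    exact hmono
  have h3le : ∫ p, (pdz (pdz ψ) p.2 p.1) ^ 2 * p.2 ∂P
      ≤ ∫ p, ((pdr (pdz ψ) p.2 p.1) ^ 2 + (pdz (pdz ψ) p.2 p.1) ^ 2) * p.2 ∂P := by
    refine integral_mono_ae i3 i1 ?_
    filter_upwards [haepos] with p hr
    nlinarith [mul_nonneg (sq_nonneg (pdr (pdz ψ) p.2 p.1)) hr.le]
  have hI2nonneg : 0 ≤ ∫ p, (pdz ψ p.2 p.1) ^ 2 / p.2 ∂P := by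
    refine integral_nonneg_of_ae ?_
    filter_upwards [haepos] with p hr
    positivity
  have hI1nonneg : 0 ≤ ∫ p, ((pdr (pdz ψ) p.2 p.1) ^ 2 + (pdz (pdz ψ) p.2 p.1) ^ 2) * p.2 ∂P := by
    refine integral_nonneg_of_ae ?_
    filter_upwards [haepos] with p hr
    positivity
  have FINAL : ∫ p, ((pdr (pdz ψ) p.2 p.1) ^ 2 + (pdz (pdz ψ) p.2 p.1) ^ 2) * p.2 ∂P
      + ∫ p, (pdz ψ p.2 p.1) ^ 2 / p.2 ∂P ≤ ∫ p, (ω p.2 p.1) ^ 2 * p.2 ∂P := by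
    linarith [KEY, hcross_le, h3le, hI2nonneg]
  -- wrap up in ENNReal
  have hae28 : (fun p : ℝ × ℝ => (pdz ψ p.2 p.1) ^ 2 / p.2) =ᵐ[P]
      (fun p : ℝ × ℝ => (pdz ψ p.2 p.1) ^ 2 / p.2 ^ 2 * p.2) := by
    filter_upwards [haepos] with p hr
    field_simp
  have i2 : Integrable (fun p : ℝ × ℝ => (pdz ψ p.2 p.1) ^ 2 / p.2 ^ 2 * p.2) P :=
    ih8.congr hae28
  have m1 : AEMeasurable (fun p : ℝ × ℝ =>
      ((pdr (pdz ψ) p.2 p.1) ^ 2 + (pdz (pdz ψ) p.2 p.1) ^ 2) * p.2) P :=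
    ((((hsw hg1s).pow 2).add ((hsw hg2s).pow 2)).mul continuous_snd).aemeasurable
  have m2 : AEMeasurable (fun p : ℝ × ℝ => (pdz ψ p.2 p.1) ^ 2 / p.2 ^ 2 * p.2) P :=
    ((((hsw hg).measurable.pow_const 2).div
      (measurable_snd.pow_const 2)).mul measurable_snd).aemeasurable
  rw [hlconv _ m1, hlconv _ m2, hlconv _ aefω]
  rw [← ofReal_integral_eq_lintegral_ofReal i1
      (by filter_upwards [haepos] with p hr; positivity),
    ← ofReal_integral_eq_lintegral_ofReal i2
      (by filter_upwards [haepos] with p hr; positivity),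
    ← ofReal_integral_eq_lintegral_ofReal iω
      (by filter_upwards [haepos] with p hr; positivity)]
  rw [ENNReal.ofReal_one, one_mul]
  have hI2eq : ∫ p, (pdz ψ p.2 p.1) ^ 2 / p.2 ^ 2 * p.2 ∂P
      = ∫ p, (pdz ψ p.2 p.1) ^ 2 / p.2 ∂P := (integral_congr_ae hae28).symm
  rw [← ENNReal.ofReal_add hI1nonneg (by rw [hI2eq]; exact hI2nonneg)]
  refine ENNReal.ofReal_le_ofReal ?_
  rw [hI2eq]
  exact FINAL
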